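/- Let G be the uniform disk graph on an n-point set P ⊆ [0,1]² with radius r (edges between points at Euclidean distance ≤ r), where every cell of the √n × √n grid contains at most b points. For any two vertices v, u with ‖v − u‖ ≤ r, the number of vertices adjacent to exactly one of v, u is at most C·b·(r·‖v−u‖·n + r·√n + 1) for an absolute constant C. -/

import Mathlib

open scoped Classical

/-- `p` lies in cell `(i, j)` of the regular `m × m` grid on the unit square
(cells are closed squares of side `1/m`). -/
def InCell (m : ℕ) (i j : Fin m) (p : EuclideanSpace ℝ (Fin 2)) : Prop :=
  (i : ℝ) / m ≤ p 0 ∧ p 0 ≤ ((i : ℝ) + 1) / m ∧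
  (j : ℝ) / m ≤ p 1 ∧ p 1 ≤ ((j : ℝ) + 1) / m


open MeasureTheory Metric Set Finset



lemma volume_box (a : Fin 2 → ℝ) (δ : ℝ) :
    volume {q : EuclideanSpace ℝ (Fin 2) | ∀ k, q k ∈ Set.Ioo (a k) (a k + δ)} =
      ENNReal.ofReal δ * ENNReal.ofReal δ := by
  have h : {q : EuclideanSpace ℝ (Fin 2) | ∀ k, q k ∈ Set.Ioo (a k) (a k + δ)} =
      (MeasurableEquiv.toLp 2 (Fin 2 → ℝ)).symm ⁻¹'
        (Set.univ.pi fun k => Set.Ioo (a k) (a k + δ)) := by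
    ext q
    simp only [Set.mem_preimage, Set.mem_pi, Set.mem_univ, forall_true_left, Set.mem_setOf_eq,
]
    rfl
  rw [h, (EuclideanSpace.volume_preserving_symm_measurableEquiv_toLp (Fin 2)).measure_preimage
      ((MeasurableSet.univ_pi fun _ => measurableSet_Ioo).nullMeasurableSet),
    volume_pi_pi]
  simp [Real.volume_Ioo, Fin.prod_univ_two, sq]

lemma measurableSet_box (a : Fin 2 → ℝ) (δ : ℝ) :
    MeasurableSet {q : EuclideanSpace ℝ (Fin 2) | ∀ k, q k ∈ Set.Ioo (a k) (a k + δ)} := by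
  have h : {q : EuclideanSpace ℝ (Fin 2) | ∀ k, q k ∈ Set.Ioo (a k) (a k + δ)} =
      (MeasurableEquiv.toLp 2 (Fin 2 → ℝ)).symm ⁻¹'
        (Set.univ.pi fun k => Set.Ioo (a k) (a k + δ)) := by
    ext q
    simp only [Set.mem_preimage, Set.mem_pi, Set.mem_univ, forall_true_left, Set.mem_setOf_eq,
]
    rfl
  rw [h]
  exact (MeasurableSet.univ_pi fun _ => measurableSet_Ioo).preimage
    (MeasurableEquiv.toLp 2 (Fin 2 → ℝ)).symm.measurable

lemma volume_ball2 (v : EuclideanSpace ℝ (Fin 2)) (t : ℝ) (ht : 0 ≤ t) :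
    volume (Metric.ball v t) = ENNReal.ofReal (Real.pi * t ^ 2) := by
  rw [EuclideanSpace.volume_ball]
  have h2 : Real.Gamma 2 = 1 := by
    rw [show (2:ℝ) = (1:ℕ)+1 by norm_num, Real.Gamma_nat_eq_factorial]; simp
  simp only [Fintype.card_fin]
  norm_num [h2, Real.sq_sqrt Real.pi_nonneg]
  rw [← ENNReal.ofReal_pow ht, ← ENNReal.ofReal_mul (by positivity)]
  ring_nf

lemma volume_closedBall2 (v : EuclideanSpace ℝ (Fin 2)) (t : ℝ) (ht : 0 ≤ t) :
    volume (Metric.closedBall v t) = ENNReal.ofReal (Real.pi * t ^ 2) := by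
  rw [Measure.addHaar_closedBall_eq_addHaar_ball, volume_ball2 v t ht]

lemma oneD_disj {M : ℝ} (hM : 0 < M) {i i' : ℕ} (h : i ≠ i') {x : ℝ}
    (h1 : x ∈ Set.Ioo ((i:ℝ)/M) ((i:ℝ)/M + 1/M))
    (h2 : x ∈ Set.Ioo ((i':ℝ)/M) ((i':ℝ)/M + 1/M)) : False := by
  obtain ⟨ha1, hb1⟩ := h1
  obtain ⟨ha2, hb2⟩ := h2
  rcases h.lt_or_gt with h' | h'
  · have hle : ((i:ℝ) + 1) ≤ (i' : ℝ) := by exact_mod_cast h'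
    have : (i:ℝ)/M + 1/M ≤ (i':ℝ)/M := by
      rw [← add_div]; gcongr
    linarith
  · have hle : ((i':ℝ) + 1) ≤ (i : ℝ) := by exact_mod_cast h'
    have : (i':ℝ)/M + 1/M ≤ (i:ℝ)/M := by
      rw [← add_div]; gcongr
    linarith

lemma exists_idx (m : ℕ) (hm : 0 < m) (x : ℝ) (h0 : 0 ≤ x) (h1 : x ≤ 1) :
    ∃ i : Fin m, (i:ℝ)/m ≤ x ∧ x ≤ ((i:ℝ)+1)/m := by
  have hM : (0:ℝ) < m := by exact_mod_cast hm
  rcases lt_or_ge (x * m) m with hx | hx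
  · have hk0 : 0 ≤ ⌊x * m⌋ := Int.floor_nonneg.mpr (by positivity)
    have hkx : (⌊x * m⌋ : ℝ) ≤ x * m := Int.floor_le _
    have hlt : ⌊x * m⌋ < (m : ℤ) := by
      have : (⌊x * m⌋ : ℝ) < m := lt_of_le_of_lt hkx hx
      exact_mod_cast this
    have hltn : ⌊x * m⌋.toNat < m := by omega
    refine ⟨⟨⌊x * m⌋.toNat, hltn⟩, ?_, ?_⟩
    · have : ((⌊x * m⌋.toNat : ℤ) : ℝ) ≤ x * m := by rw [Int.toNat_of_nonneg hk0]; exact hkx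
      rw [div_le_iff₀ hM]
      exact_mod_cast this
    · have hfl : x * m < (⌊x * m⌋ : ℝ) + 1 := Int.lt_floor_add_one _
      rw [le_div_iff₀ hM]
      have : ((⌊x * m⌋.toNat : ℤ) : ℝ) = (⌊x * m⌋ : ℝ) := by rw [Int.toNat_of_nonneg hk0]
      push_cast at this ⊢
      linarith
  · refine ⟨⟨m - 1, by omega⟩, ?_, ?_⟩
    · have hx1 : 1 ≤ x := by
        by_contra hc
        push_neg at hc
        nlinarith
      have : ((m - 1 : ℕ) : ℝ) / m ≤ 1 := by
        rw [div_le_one hM]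
        exact_mod_cast Nat.sub_le m 1
      simpa using this.trans hx1
    · have : (((m - 1 : ℕ) : ℝ) + 1) / m = 1 := by
        have : ((m - 1 : ℕ) : ℝ) + 1 = m := by
          have := Nat.succ_pred_eq_of_pos hm
          exact_mod_cast congrArg (Nat.cast : ℕ → ℝ) this
        rw [this, div_self hM.ne']
      simpa [this] using h1

set_option maxHeartbeats 2000000 in
lemma cell_count (m : ℕ) (hm : 0 < m) (v : EuclideanSpace ℝ (Fin 2)) (σ ρ : ℝ)
    (hρ : 0 ≤ ρ) (hσρ : σ ≤ ρ) (S : Finset (Fin m × Fin m))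
    (hS : ∀ ij ∈ S, ∃ p, InCell m ij.1 ij.2 p ∧ σ ≤ dist p v ∧ dist p v ≤ ρ) :
    (S.card : ℝ) ≤ Real.pi * (m:ℝ)^2 *
      ((ρ + Real.sqrt 2 / m)^2 - (max (σ - Real.sqrt 2 / m) 0)^2) := by
  have hM : (0:ℝ) < m := by exact_mod_cast hm
  set c : ℝ := Real.sqrt 2 / m with hc_def
  have hc : 0 < c := by positivity
  set R : ℝ := ρ + c with hR_def
  set s : ℝ := max (σ - c) 0 with hs_def
  have hR0 : 0 ≤ R := by positivity
  have hs0 : 0 ≤ s := le_max_right _ _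
  have hsR : s ≤ R := max_le (by linarith) hR0
  -- the open boxes
  set a : Fin m × Fin m → Fin 2 → ℝ :=
    fun ij k => if k = 0 then ((ij.1 : ℕ) : ℝ)/m else ((ij.2 : ℕ) : ℝ)/m with ha_def
  set B : Fin m × Fin m → Set (EuclideanSpace ℝ (Fin 2)) :=
    fun ij => {q | ∀ k, q k ∈ Set.Ioo (a ij k) (a ij k + 1/(m:ℝ))} with hB_def
  -- disjointness
  have hdisj : (↑S : Set (Fin m × Fin m)).PairwiseDisjoint B := by
    intro ij _ kl _ hne
    rw [Function.onFun, Set.disjoint_left]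
    intro q hq hq'
    have h0 := hq 0; have h0' := hq' 0
    have h1 := hq 1; have h1' := hq' 1
    simp only [ha_def, if_pos rfl] at h0 h0'
    have hne1 : (1 : Fin 2) ≠ 0 := by decide
    simp only [ha_def, if_neg hne1] at h1 h1'
    by_cases hfst : ij.1 = kl.1
    · have hsnd : ij.2 ≠ kl.2 := fun h2 => hne (Prod.ext hfst h2)
      exact oneD_disj hM (fun hv => hsnd (Fin.ext hv)) h1 h1'
    · exact oneD_disj hM (fun hv => hfst (Fin.ext hv)) h0 h0'
  -- subset of fat annulus
  have hsub : ∀ ij ∈ S, B ij ⊆ Metric.closedBall v R \ Metric.ball v s := by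
    intro ij hij q hq
    obtain ⟨p, hcell, hσp, hpρ⟩ := hS ij hij
    obtain ⟨hp1, hp2, hp3, hp4⟩ := hcell
    have h0 := hq 0; have h1 := hq 1
    simp only [ha_def, if_pos rfl] at h0
    have hne1 : (1 : Fin 2) ≠ 0 := by decide
    simp only [ha_def, if_neg hne1] at h1
    have hq0 : (q 0 - p 0)^2 ≤ (1/(m:ℝ))^2 := by
      have hd1 : ((ij.1 : ℕ) : ℝ)/m + 1/m = (((ij.1 : ℕ) : ℝ) + 1)/m := by ring
      obtain ⟨hl, hr⟩ := h0
      rw [hd1] at hr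
      apply sq_le_sq'
      · have : ((ij.1 : ℕ) : ℝ)/m - (((ij.1 : ℕ) : ℝ) + 1)/m = -(1/m) := by ring
        nlinarith [hl, hp2]
      · nlinarith [hr, hp1]
    have hq1 : (q 1 - p 1)^2 ≤ (1/(m:ℝ))^2 := by
      have hd1 : ((ij.2 : ℕ) : ℝ)/m + 1/m = (((ij.2 : ℕ) : ℝ) + 1)/m := by ring
      obtain ⟨hl, hr⟩ := h1
      rw [hd1] at hr
      apply sq_le_sq'
      · nlinarith [hl, hp4]
      · nlinarith [hr, hp3]
    have hdqp : dist q p ≤ c := by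
      rw [EuclideanSpace.dist_eq, Fin.sum_univ_two]
      simp only [Real.dist_eq, sq_abs]
      have hsum : (q 0 - p 0)^2 + (q 1 - p 1)^2 ≤ 2 * (1/(m:ℝ))^2 := by linarith
      calc Real.sqrt ((q 0 - p 0)^2 + (q 1 - p 1)^2)
          ≤ Real.sqrt (2 * (1/(m:ℝ))^2) := Real.sqrt_le_sqrt hsum
        _ = c := by
            rw [Real.sqrt_mul (by norm_num), Real.sqrt_sq (by positivity)]
            rw [hc_def]; ring
    constructor
    · rw [Metric.mem_closedBall]
      calc dist q v ≤ dist q p + dist p v := dist_triangle _ _ _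
        _ ≤ c + ρ := add_le_add hdqp hpρ
        _ = R := by rw [hR_def]; ring
    · rw [Metric.mem_ball, not_lt]
      have hge : σ - c ≤ dist q v := by
        have := dist_triangle p q v
        rw [dist_comm p q] at this
        linarith
      exact max_le hge dist_nonneg

  -- measure computation
  have hkey : ∑ ij ∈ S, volume (B ij) ≤ volume (Metric.closedBall v R \ Metric.ball v s) := by
    rw [← measure_biUnion_finset hdisj (fun ij _ => measurableSet_box _ _)]
    exact measure_mono (Set.iUnion₂_subset hsub)
  have hboxv : ∀ ij : Fin m × Fin m, volume (B ij) = ENNReal.ofReal ((1/(m:ℝ)) * (1/(m:ℝ))) := by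
    intro ij
    rw [hB_def]
    rw [volume_box (a ij) (1/(m:ℝ)), ← ENNReal.ofReal_mul (by positivity)]
  have hdiffv : volume (Metric.closedBall v R \ Metric.ball v s) =
      ENNReal.ofReal (Real.pi * R ^ 2 - Real.pi * s ^ 2) := by
    rw [measure_diff (Metric.ball_subset_ball hsR |>.trans Metric.ball_subset_closedBall)
        measurableSet_ball.nullMeasurableSet measure_ball_lt_top.ne,
      volume_closedBall2 v R hR0, volume_ball2 v s hs0,
      ENNReal.ofReal_sub _ (by positivity)]
  rw [hdiffv] at hkey
  have hsum : ∑ ij ∈ S, volume (B ij) = ENNReal.ofReal ((S.card : ℝ) * ((1/(m:ℝ)) * (1/(m:ℝ)))) := by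
    rw [Finset.sum_congr rfl (fun ij _ => hboxv ij), Finset.sum_const, nsmul_eq_mul,
      ENNReal.ofReal_mul (by positivity : (0:ℝ) ≤ (S.card:ℝ)), ENNReal.ofReal_natCast]
  rw [hsum] at hkey
  have hreal : (S.card : ℝ) * ((1/(m:ℝ)) * (1/(m:ℝ))) ≤ Real.pi * R ^ 2 - Real.pi * s ^ 2 := by
    have hrhs : 0 ≤ Real.pi * R ^ 2 - Real.pi * s ^ 2 := by
      have h2 : s ^ 2 ≤ R ^ 2 := pow_le_pow_left₀ hs0 hsR 2
      have h3 := mul_le_mul_of_nonneg_left h2 Real.pi_nonneg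
      linarith
    exact (ENNReal.ofReal_le_ofReal_iff hrhs).mp hkey
  have hMne : ((m:ℝ))^2 ≠ 0 := by positivity
  calc (S.card : ℝ) = (S.card : ℝ) * ((1/(m:ℝ)) * (1/(m:ℝ))) * (m:ℝ)^2 := by
        field_simp
    _ ≤ (Real.pi * R ^ 2 - Real.pi * s ^ 2) * (m:ℝ)^2 := by
        apply mul_le_mul_of_nonneg_right hreal (by positivity)
    _ = Real.pi * (m:ℝ)^2 * (R^2 - s^2) := by ring


lemma arith (r d M c : ℝ) (hr : 0 < r) (hd : 0 ≤ d) (hdr : d ≤ r) (hM : 1 ≤ M)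
    (hc : 0 < c) (hcM : c * M = Real.sqrt 2) :
    Real.pi * M^2 * ((r + d + c)^2 - (max (r - d - c) 0)^2) ≤ 50 * (r*d*M^2 + r*M + 1) := by
  have hπ : Real.pi ≤ 4 := Real.pi_le_four
  have hπ0 : 0 ≤ Real.pi := Real.pi_nonneg
  have hM0 : (0:ℝ) < M := lt_of_lt_of_le one_pos hM
  have hs2 : Real.sqrt 2 ^ 2 = 2 := Real.sq_sqrt (by norm_num)
  have hs15 : Real.sqrt 2 ≤ 1.5 := by
    nlinarith [Real.sq_sqrt (show (0:ℝ) ≤ 2 by norm_num), Real.sqrt_nonneg 2]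
  have hc2M2 : c^2 * M^2 = 2 := by
    calc c^2 * M^2 = (c*M)^2 := by ring
      _ = 2 := by rw [hcM, hs2]
  have hcM15 : c * M ≤ 1.5 := by rw [hcM]; exact hs15
  rcases le_or_gt (r - d - c) 0 with h | h
  · rw [max_eq_right h, show ((r+d+c)^2 - (0:ℝ)^2) = (r+d+c)^2 from by ring]
    have h1 : 0 ≤ (d + c - r) * (r * M^2) :=
      mul_nonneg (by linarith) (by positivity)
    have h2 : 0 ≤ (r - d) * (d * M^2) :=
      mul_nonneg (by linarith) (by positivity)
    have h3 : 0 ≤ (1.5 - c*M) * (r*M) :=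
      mul_nonneg (by linarith) (by positivity)
    have h4 : 0 ≤ (r - d) * (c * M^2) :=
      mul_nonneg (by linarith) (by positivity)
    have key : M^2 * (r+d+c)^2 ≤ 4*(r*d*M^2) + 8*(r*M) + 2 := by nlinarith [h1, h2, h3, h4, hc2M2]
    have hnn : 0 ≤ M^2*(r+d+c)^2 := by positivity
    have hrdM : 0 ≤ r*d*M^2 := by positivity
    have hrM : 0 ≤ r*M := by positivity
    calc Real.pi*M^2*(r+d+c)^2 = Real.pi*(M^2*(r+d+c)^2) := by ring
      _ ≤ 4*(M^2*(r+d+c)^2) := mul_le_mul_of_nonneg_right hπ hnn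
      _ ≤ 4*(4*(r*d*M^2) + 8*(r*M) + 2) := by linarith
      _ ≤ 50*(r*d*M^2 + r*M + 1) := by linarith
  · rw [max_eq_left h.le]
    have hexp : Real.pi*M^2*((r+d+c)^2 - (r-d-c)^2) =
        4*Real.pi*(r*d*M^2) + 4*Real.pi*((c*M)*(r*M)) := by ring
    rw [hexp]
    have hrM : 0 ≤ r*M := by positivity
    have hrdM : 0 ≤ r*d*M^2 := by positivity
    have hp1 : Real.pi*(r*d*M^2) ≤ 4*(r*d*M^2) := mul_le_mul_of_nonneg_right hπ hrdM
    have hp2 : (c*M)*(r*M) ≤ 1.5*(r*M) := mul_le_mul_of_nonneg_right hcM15 hrM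
    have hp3 : Real.pi*((c*M)*(r*M)) ≤ 4*(1.5*(r*M)) := by
      calc Real.pi*((c*M)*(r*M)) ≤ 4*((c*M)*(r*M)) :=
            mul_le_mul_of_nonneg_right hπ (mul_nonneg (by positivity) hrM)
        _ ≤ 4*(1.5*(r*M)) := by linarith
    linarith


set_option maxHeartbeats 1000000 in
/-- There is an absolute constant `C` such that in the uniform disk graph of radius `r` on an
`n = m²`-point set `P` in the unit square with at most `b` points per grid cell (vertices are
points of `P`, adjacent iff distinct and at distance ≤ r): for any edge `{v, u}`, the number
of vertices adjacent to exactly one of `v, u` is at most `C·b·(r·‖v−u‖·n + r·√n + 1)`. -/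
theorem disk_graph_hamming_bound :
    ∃ C : ℝ, 0 < C ∧
      ∀ (m b : ℕ) (P : Finset (EuclideanSpace ℝ (Fin 2))) (r : ℝ), 0 < r →
        P.card = m ^ 2 →
        (∀ p ∈ P, ∀ i, 0 ≤ p i ∧ p i ≤ 1) →
        (∀ i j : Fin m, (P.filter (fun p => InCell m i j p)).card ≤ b) →
        ∀ v ∈ P, ∀ u ∈ P, dist v u ≤ r →
          ((P.filter fun p =>
              Xor' (p ≠ v ∧ dist p v ≤ r) (p ≠ u ∧ dist p u ≤ r)).card : ℝ) ≤
            C * (b : ℝ) * (r * dist v u * (m ^ 2 : ℝ) + r * Real.sqrt ((m : ℝ) ^ 2) + 1) := by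
  refine ⟨60, by norm_num, ?_⟩
  intro m b P r hr hcard hPbox hb v hv u hu hvu
  have hm : 0 < m := by
    rcases Nat.eq_zero_or_pos m with h0 | h
    · exfalso
      subst h0
      simp only [pow_succ, pow_zero, one_mul, Nat.zero_mul, mul_zero] at hcard
      rw [Finset.card_eq_zero] at hcard
      subst hcard
      exact absurd hv (by simp)
    · exact h
  have hM : (0:ℝ) < m := by exact_mod_cast hm
  have hM1 : (1:ℝ) ≤ m := by exact_mod_cast hm
  set d : ℝ := dist v u with hd_def
  have hd0 : 0 ≤ d := dist_nonneg
  have hb1 : 1 ≤ b := by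
    obtain ⟨i, hi1, hi2⟩ := exists_idx m hm (v 0) (hPbox v hv 0).1 (hPbox v hv 0).2
    obtain ⟨j, hj1, hj2⟩ := exists_idx m hm (v 1) (hPbox v hv 1).1 (hPbox v hv 1).2
    have hvcell : v ∈ P.filter (fun p => InCell m i j p) :=
      Finset.mem_filter.mpr ⟨hv, ⟨hi1, hi2, hj1, hj2⟩⟩
    have h1 := hb i j
    have hpos : 0 < (P.filter (fun p => InCell m i j p)).card :=
      Finset.card_pos.mpr ⟨v, hvcell⟩
    omega
  set AnnP := P.filter (fun p => r - d ≤ dist p v ∧ dist p v ≤ r + d) with hAnn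
  set S := Finset.univ.filter
    (fun ij : Fin m × Fin m => ∃ p ∈ AnnP, InCell m ij.1 ij.2 p) with hS_def
  -- Step 1: the xor set is inside {v, u} ∪ AnnP
  have hsub : P.filter (fun p => Xor' (p ≠ v ∧ dist p v ≤ r) (p ≠ u ∧ dist p u ≤ r)) ⊆
      insert v (insert u AnnP) := by
    intro p hp
    obtain ⟨hpP, hx⟩ := Finset.mem_filter.mp hp
    by_cases hpv : p = v
    · simp [hpv]
    by_cases hpu : p = u
    · simp [hpu]
    rw [Finset.mem_insert, Finset.mem_insert]
    right; right
    rw [hAnn, Finset.mem_filter]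
    refine ⟨hpP, ?_⟩
    have t1 := dist_triangle p v u
    have t2 := dist_triangle p u v
    have hduv : dist u v = d := by rw [hd_def, dist_comm]
    simp only [Xor'] at hx
    rcases hx with ⟨⟨_, h1⟩, h2⟩ | ⟨⟨_, h1⟩, h2⟩
    · have h3 : ¬ (dist p u ≤ r) := fun hle => h2 ⟨hpu, hle⟩
      push_neg at h3
      constructor
      · linarith
      · linarith
    · have h3 : ¬ (dist p v ≤ r) := fun hle => h2 ⟨hpv, hle⟩
      push_neg at h3
      constructor
      · linarith
      · linarith
  have hcard1 : (P.filter (fun p =>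
      Xor' (p ≠ v ∧ dist p v ≤ r) (p ≠ u ∧ dist p u ≤ r))).card ≤ 2 + AnnP.card := by
    have c1 := Finset.card_le_card hsub
    have c2 := Finset.card_insert_le v (insert u AnnP)
    have c3 := Finset.card_insert_le u AnnP
    omega
  -- Step 2: AnnP is covered by at most S.card cells of ≤ b points each
  have hcard2 : AnnP.card ≤ S.card * b := by
    have hsub2 : AnnP ⊆ S.biUnion (fun ij => P.filter (fun p => InCell m ij.1 ij.2 p)) := by
      intro p hp
      have hpP : p ∈ P := (Finset.mem_filter.mp hp).1
      obtain ⟨i, hi1, hi2⟩ := exists_idx m hm (p 0) (hPbox p hpP 0).1 (hPbox p hpP 0).2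
      obtain ⟨j, hj1, hj2⟩ := exists_idx m hm (p 1) (hPbox p hpP 1).1 (hPbox p hpP 1).2
      apply Finset.mem_biUnion.mpr
      refine ⟨(i, j), ?_, Finset.mem_filter.mpr ⟨hpP, ⟨hi1, hi2, hj1, hj2⟩⟩⟩
      rw [hS_def]
      exact Finset.mem_filter.mpr ⟨Finset.mem_univ _, ⟨p, hp, ⟨hi1, hi2, hj1, hj2⟩⟩⟩
    calc AnnP.card ≤ (S.biUnion fun ij => P.filter (fun p => InCell m ij.1 ij.2 p)).card :=
          Finset.card_le_card hsub2
      _ ≤ ∑ ij ∈ S, (P.filter (fun p => InCell m ij.1 ij.2 p)).card :=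
          Finset.card_biUnion_le
      _ ≤ S.card * b := by
          have := Finset.sum_le_card_nsmul S
            (fun ij => (P.filter (fun p => InCell m ij.1 ij.2 p)).card) b
            (fun ij _ => hb ij.1 ij.2)
          simpa [smul_eq_mul] using this
  -- Step 3: geometric bound on the number of cells
  have hcc : (S.card : ℝ) ≤ Real.pi * (m:ℝ)^2 *
      ((r + d + Real.sqrt 2 / m)^2 - (max (r - d - Real.sqrt 2 / m) 0)^2) := by
    have := cell_count m hm v (r - d) (r + d) (by linarith) (by linarith) S ?_
    · convert this using 3 <;> ring
    · intro ij hij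
      rw [hS_def] at hij
      obtain ⟨-, p, hp, hcell⟩ := Finset.mem_filter.mp hij
      obtain ⟨-, hp1, hp2⟩ := Finset.mem_filter.mp hp
      exact ⟨p, hcell, hp1, hp2⟩
  have har := arith r d (m:ℝ) (Real.sqrt 2 / m) hr hd0 hvu hM1 (by positivity)
    (by field_simp)
  -- Step 4: combine
  have hK1 : (1:ℝ) ≤ r * d * (m:ℝ)^2 + r * (m:ℝ) + 1 := by
    have q1 : 0 ≤ r * d * (m:ℝ)^2 := by positivity
    have q2 : 0 ≤ r * (m:ℝ) := by positivity
    linarith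
  have hbR : (1:ℝ) ≤ (b:ℝ) := by exact_mod_cast hb1
  have hSb : (S.card : ℝ) * (b:ℝ) ≤
      50 * (r * d * (m:ℝ)^2 + r * (m:ℝ) + 1) * (b:ℝ) := by
    apply mul_le_mul_of_nonneg_right (hcc.trans har) (by positivity)
  have hLHS : ((P.filter (fun p =>
      Xor' (p ≠ v ∧ dist p v ≤ r) (p ≠ u ∧ dist p u ≤ r))).card : ℝ) ≤
      2 + (S.card : ℝ) * (b:ℝ) := by
    have : ((P.filter (fun p =>
        Xor' (p ≠ v ∧ dist p v ≤ r) (p ≠ u ∧ dist p u ≤ r))).card : ℝ) ≤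
        2 + (AnnP.card : ℝ) := by exact_mod_cast hcard1
    have h2 : (AnnP.card : ℝ) ≤ (S.card : ℝ) * (b:ℝ) := by exact_mod_cast hcard2
    linarith
  rw [Real.sqrt_sq hM.le]
  have hKnn : (0:ℝ) ≤ r * d * (m:ℝ)^2 + r * (m:ℝ) + 1 := by linarith
  have hfin : ((P.filter (fun p =>
      Xor' (p ≠ v ∧ dist p v ≤ r) (p ≠ u ∧ dist p u ≤ r))).card : ℝ) ≤
      60 * (b:ℝ) * (r * d * (m:ℝ)^2 + r * (m:ℝ) + 1) := by
    nlinarith [hLHS, hSb, hK1, hbR, hKnn]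
  calc ((P.filter (fun p =>
      Xor' (p ≠ v ∧ dist p v ≤ r) (p ≠ u ∧ dist p u ≤ r))).card : ℝ) ≤
      60 * (b:ℝ) * (r * d * (m:ℝ)^2 + r * (m:ℝ) + 1) := hfin
    _ = 60 * (b:ℝ) * (r * d * ((m:ℝ)^2) + r * (m:ℝ) + 1) := by ring
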